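/- arXiv:2210.00466 — 3 statements merged into one kernel-verified Lean document; each statement's English description precedes it below -/
import Mathlib

section
/- Let $A = \mathbb{C}[\partial]a$ be a free $\mathbb{C}[\partial]$-module of rank one with $\lambda$-product $a_\lambda a = (\partial + \lambda + c)a$ for a fixed $c \in \mathbb{C}$ (extended by conformal sesquilinearity). Then $A$ is a left-symmetric conformal algebra. -/
/- Encoding conventions.
A `ℂ[∂]`-module is encoded as a complex vector space `A` together with an
endomorphism `D : Module.End ℂ A` (the action of `∂`).
A polynomial `Σ cₙ λⁿ ∈ A[λ]` is encoded by its coefficient family `ℕ →₀ A`,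
and `ev l p` is its evaluation at `λ = l`.  Since `ℂ` is infinite, a polynomial
identity in the formal variables `λ, μ, …` is equivalent to the corresponding
family of identities for all complex values of the variables, which is how all
axioms are stated below.
A `λ`-product `a ⊗ b ↦ a_λ b ∈ A[λ]` is encoded as `mul : A → A → (ℕ →₀ A)`
(the coefficients of `a_λ b`), its evaluation at `λ = l` being `ev l (mul a b)`.
`substNeg D p` is the result of substituting the variable of `p` by `-∂-λ`:
it is again a polynomial in `λ` with coefficients `ℕ →₀ A`, so that
`b_{-∂-λ} a` is encoded as `substNeg D (mul b a)` (as a polynomial in `λ`). -/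

namespace LSCpaper

open Finsupp

variable {A M V : Type*} [AddCommGroup A] [Module ℂ A] [AddCommGroup M] [Module ℂ M]
  [AddCommGroup V] [Module ℂ V]

/-- Evaluation of a polynomial with coefficients in `V` at a complex number. -/
noncomputable def ev (l : ℂ) (p : ℕ →₀ V) : V := p.sum fun n c => l ^ n • c

/-- Substitution of `-∂ - λ` for the variable of `p`; the result is the
coefficient family (in `λ`) of the resulting polynomial. -/
noncomputable def substNeg (D : Module.End ℂ A) (p : ℕ →₀ A) : ℕ →₀ A :=
  p.sum fun i c => ∑ k ∈ Finset.range (i + 1),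
    Finsupp.single k ((((-1 : ℂ) ^ k * (i.choose k : ℂ))) • ((-D) ^ (i - k)) c)

/-- `ℂ`-bilinearity of a `λ`-product. -/
def Bilin (f : A → M → ℕ →₀ V) : Prop :=
  (∀ a a' b, f (a + a') b = f a b + f a' b) ∧
  (∀ (r : ℂ) (a : A) (b : M), f (r • a) b = r • f a b) ∧
  (∀ a b b', f a (b + b') = f a b + f a b') ∧
  (∀ (r : ℂ) (a : A) (b : M), f a (r • b) = r • f a b)

/-- `A` with `∂`-action `D` and `λ`-product `mul` is a left-symmetric conformal
algebra. -/
structure IsLSC (D : Module.End ℂ A) (mul : A → A → ℕ →₀ A) : Prop where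
  bilin : Bilin mul
  sesq1 : ∀ (l : ℂ) (a b : A), ev l (mul (D a) b) = (-l) • ev l (mul a b)
  sesq2 : ∀ (l : ℂ) (a b : A), ev l (mul a (D b)) = D (ev l (mul a b)) + l • ev l (mul a b)
  lsym : ∀ (l m : ℂ) (a b c : A),
    ev (l + m) (mul (ev l (mul a b)) c) - ev l (mul a (ev m (mul b c))) =
      ev (l + m) (mul (ev m (mul b a)) c) - ev m (mul b (ev l (mul a c)))

/-- `A` with `∂`-action `D` and `λ`-bracket `br` is a Lie conformal algebra. -/
structure IsLieConf (D : Module.End ℂ A) (br : A → A → ℕ →₀ A) : Prop where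
  bilin : Bilin br
  sesq1 : ∀ (l : ℂ) (a b : A), ev l (br (D a) b) = (-l) • ev l (br a b)
  sesq2 : ∀ (l : ℂ) (a b : A), ev l (br a (D b)) = D (ev l (br a b)) + l • ev l (br a b)
  skew : ∀ (l : ℂ) (a b : A), ev l (br a b) = - ev l (substNeg D (br b a))
  jacobi : ∀ (l m : ℂ) (a b c : A),
    ev l (br a (ev m (br b c))) =
      ev (l + m) (br (ev l (br a b)) c) + ev m (br b (ev l (br a c)))

/-- The evaluated bracket `[a_λ b] = a_λ b - b_{-∂-λ} a` of the sub-adjacent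
Lie conformal algebra. -/
noncomputable def brEv (D : Module.End ℂ A) (mul : A → A → ℕ →₀ A) (l : ℂ) (a b : A) : A :=
  ev l (mul a b) - ev l (substNeg D (mul b a))

end LSCpaper

namespace LSCpaper

open Polynomial

noncomputable def mul0 (c : ℂ) (f g : Polynomial ℂ) : ℕ →₀ Polynomial ℂ :=
  (Polynomial.eval₂ ((Polynomial.C : Polynomial ℂ →+* Polynomial (Polynomial ℂ)).comp Polynomial.C)
      (-Polynomial.X) f *
   Polynomial.eval₂ ((Polynomial.C : Polynomial ℂ →+* Polynomial (Polynomial ℂ)).comp Polynomial.C)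
      (Polynomial.C Polynomial.X + Polynomial.X) g *
   (Polynomial.C Polynomial.X + Polynomial.X + Polynomial.C (Polynomial.C c))).toFinsupp.coeff

lemma ev_toFinsupp (l : ℂ) (q : Polynomial (Polynomial ℂ)) :
    ev l q.toFinsupp.coeff = q.eval (Polynomial.C l) := by
  classical
  unfold ev
  rw [Polynomial.eval_eq_sum, Polynomial.sum, Finsupp.sum]
  apply Finset.sum_congr rfl
  intro n _
  rw [Polynomial.smul_eq_C_mul, map_pow, mul_comm]
  rfl

lemma ev_mul0 (c : ℂ) (l : ℂ) (f g : Polynomial ℂ) :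
    ev l (mul0 c f g) = C (f.eval (-l)) * (g.comp (X + C l)) * (X + C l + C c) := by
  rw [mul0, ev_toFinsupp]
  simp only [eval_mul, eval_add, eval_C, eval_X]
  have key : ∀ (p : Polynomial ℂ) (x : Polynomial (Polynomial ℂ)),
      Polynomial.eval (C l) (Polynomial.eval₂ ((Polynomial.C : Polynomial ℂ →+* Polynomial (Polynomial ℂ)).comp Polynomial.C) x p)
        = p.comp (Polynomial.eval (C l) x) := by
    intro p x
    rw [show Polynomial.eval (C l) = ⇑(Polynomial.evalRingHom (C l) : Polynomial (Polynomial ℂ) →+* Polynomial ℂ) from rfl,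
      Polynomial.hom_eval₂]
    have h : ((evalRingHom (C l)).comp ((Polynomial.C : Polynomial ℂ →+* Polynomial (Polynomial ℂ)).comp Polynomial.C)) = (Polynomial.C : ℂ →+* Polynomial ℂ) := by
      ext a; simp
    rw [h]; rfl
  rw [key, key]
  simp only [eval_neg, eval_X, eval_add, eval_C]
  rw [← map_neg, comp_C]

lemma smul_toFinsupp (r : ℂ) (P : Polynomial (Polynomial ℂ)) :
    r • P.toFinsupp.coeff = (Polynomial.C (Polynomial.C r) * P).toFinsupp.coeff := by
  apply Finsupp.ext
  intro n
  show r • P.coeff n = (C (C r) * P).coeff n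
  rw [Polynomial.coeff_C_mul, Polynomial.smul_eq_C_mul]

lemma smul_eq_CC_mul (r : ℂ) (P : Polynomial (Polynomial ℂ)) :
    r • P = C (C r) * P := by
  rw [Algebra.smul_def]
  norm_num [Polynomial.algebraMap_apply, Polynomial.algebraMap_eq]

/-- `A = ℂ[∂]a`, free of rank one (encoded as `ℂ[∂]` itself,
with `a = 1` and `∂` acting by multiplication by the variable), carries a
left-symmetric conformal algebra structure whose `λ`-product is determined by
`a_λ a = (∂ + λ + c) a` (and extended by conformal sesquilinearity, which is
part of `IsLSC`). -/
theorem rank_one_example (c : ℂ) :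
    ∃ mul : Polynomial ℂ → Polynomial ℂ → (ℕ →₀ Polynomial ℂ),
      IsLSC (LinearMap.mulLeft ℂ (Polynomial.X : Polynomial ℂ)) mul ∧
      ∀ l : ℂ, ev l (mul 1 1) = Polynomial.X + Polynomial.C (l + c) := by
  refine ⟨mul0 c, ⟨⟨?_, ?_, ?_, ?_⟩, ?_, ?_, ?_⟩, ?_⟩
  · intro a a' b
    simp only [mul0, eval₂_add, add_mul, Polynomial.toFinsupp_add, AddMonoidAlgebra.coeff_add]
  · intro r a b
    rw [mul0, mul0, eval₂_smul, smul_toFinsupp]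
    congr 1
    simp only [RingHom.coe_comp, Function.comp_apply]
    ring
  · intro a b b'
    simp only [mul0, eval₂_add, add_mul, mul_add, Polynomial.toFinsupp_add, AddMonoidAlgebra.coeff_add]
    abel
  · intro r a b
    rw [mul0, mul0, eval₂_smul, smul_toFinsupp]
    congr 1
    simp only [RingHom.coe_comp, Function.comp_apply]
    ring
  · intro l a b
    simp only [LinearMap.mulLeft_apply, ev_mul0, eval_mul, eval_X, map_mul,
      Polynomial.smul_eq_C_mul, map_neg]
    ring
  · intro l a b
    simp only [LinearMap.mulLeft_apply, ev_mul0, mul_comp, X_comp,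
      Polynomial.smul_eq_C_mul]
    ring
  · intro l m a b d
    simp only [ev_mul0, eval_mul, eval_add, eval_C, eval_X, eval_comp, mul_comp,
      add_comp, C_comp, X_comp, comp_assoc, map_add, map_neg, map_mul, map_sub]
    ring
  · intro l
    simp [ev_mul0, map_add]
    ring


end LSCpaper
end

section
/- Let $A$ be a left-symmetric conformal algebra, $M$ a $\mathbb{C}[\partial]$-module, and $l, r: A \to \mathrm{Cend}(M)$ two $\mathbb{C}[\partial]$-module homomorphisms. Then $(M, l, r)$ is a conformal module over $A$ if and only if the $\mathbb{C}[\partial]$-module $A\oplus M$ is a left-symmetric conformal algebra with $\lambda$-product $(a+u)_\lambda(b+v) = a_\lambda b + l(a)_\lambda v + r(b)_{-\partial-\lambda} u$. -/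
namespace LSCpaper

variable {A M : Type*} [AddCommGroup A] [Module ℂ A] [AddCommGroup M] [Module ℂ M]

/-- `(M, la, ra)` is a conformal module over the left-symmetric conformal
algebra `(A, D, mul)`.  Here `la a v` encodes `a_λ v ∈ M[λ]` and `ra v a`
encodes `v_λ a ∈ M[λ]`. -/
structure IsLSCMod (D : Module.End ℂ A) (Dm : Module.End ℂ M)
    (mul : A → A → ℕ →₀ A) (la : A → M → ℕ →₀ M) (ra : M → A → ℕ →₀ M) : Prop where
  lbilin : Bilin la
  rbilin : Bilin ra
  lsesq1 : ∀ (l : ℂ) (a : A) (v : M), ev l (la (D a) v) = (-l) • ev l (la a v)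
  lsesq2 : ∀ (l : ℂ) (a : A) (v : M),
    ev l (la a (Dm v)) = Dm (ev l (la a v)) + l • ev l (la a v)
  rsesq1 : ∀ (l : ℂ) (v : M) (a : A), ev l (ra (Dm v) a) = (-l) • ev l (ra v a)
  rsesq2 : ∀ (l : ℂ) (v : M) (a : A),
    ev l (ra v (D a)) = Dm (ev l (ra v a)) + l • ev l (ra v a)
  lcomp : ∀ (l m : ℂ) (a b : A) (v : M),
    ev (l + m) (la (ev l (mul a b)) v) - ev l (la a (ev m (la b v))) =
      ev (l + m) (la (ev m (mul b a)) v) - ev m (la b (ev l (la a v)))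
  rcomp : ∀ (l m : ℂ) (a : A) (v : M) (b : A),
    ev (l + m) (ra (ev l (la a v)) b) - ev l (la a (ev m (ra v b))) =
      ev (l + m) (ra (ev m (ra v a)) b) - ev m (ra v (ev l (mul a b)))

/-- Combine an `A`-valued and an `M`-valued polynomial into an
`(A × M)`-valued polynomial. -/
noncomputable def pairF (p : ℕ →₀ A) (q : ℕ →₀ M) : ℕ →₀ (A × M) :=
  Finsupp.mapRange (fun x => (x, (0 : M))) rfl p +
    Finsupp.mapRange (fun y => ((0 : A), y)) rfl q

end LSCpaper

namespace LSCpaper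

set_option linter.unusedSectionVars false

section helpers
variable {A M V : Type*} [AddCommGroup A] [Module ℂ A] [AddCommGroup M] [Module ℂ M]
  [AddCommGroup V] [Module ℂ V]

lemma ev_add' (l : ℂ) (p q : ℕ →₀ V) : ev l (p + q) = ev l p + ev l q :=
  Finsupp.sum_add_index' (by simp) (fun n c c' => smul_add _ _ _)

lemma ev_zero' (l : ℂ) : ev l (0 : ℕ →₀ V) = 0 := Finsupp.sum_zero_index

lemma ev_smul' (l r : ℂ) (p : ℕ →₀ V) : ev l (r • p) = r • ev l p := by
  unfold ev
  rw [Finsupp.sum_smul_index' (by simp), Finsupp.smul_sum]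
  exact Finsupp.sum_congr fun n _ => (smul_comm _ _ _)

lemma pairF_apply' (p : ℕ →₀ A) (q : ℕ →₀ M) (n : ℕ) : pairF p q n = (p n, q n) := by
  simp [pairF, Prod.ext_iff]

lemma pairF_add' (p p' : ℕ →₀ A) (q q' : ℕ →₀ M) :
    pairF (p + p') (q + q') = pairF p q + pairF p' q' := by
  ext n
  · simp [pairF_apply']
  · simp [pairF_apply']

lemma pairF_smul' (r : ℂ) (p : ℕ →₀ A) (q : ℕ →₀ M) :
    pairF (r • p) (r • q) = r • pairF p q := by
  ext n
  · simp [pairF_apply']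
  · simp [pairF_apply']

lemma ev_pairF' (l : ℂ) (p : ℕ →₀ A) (q : ℕ →₀ M) :
    ev l (pairF p q) = (ev l p, ev l q) := by
  rw [pairF, ev_add']
  unfold ev
  rw [Finsupp.sum_mapRange_index (by simp), Finsupp.sum_mapRange_index (by simp)]
  apply Prod.ext <;> simp [Finsupp.sum, Prod.fst_sum, Prod.snd_sum]

lemma bilin_zero_left {f : A → M → ℕ →₀ V} (hf : Bilin f) (b : M) : f 0 b = 0 := by
  simpa using hf.2.1 0 0 b

lemma bilin_zero_right {f : A → M → ℕ →₀ V} (hf : Bilin f) (a : A) : f a 0 = 0 := by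
  simpa using hf.2.2.2 0 a 0
end helpers

/-- Let `A` be a left-symmetric conformal algebra, `M` a
`ℂ[∂]`-module, and `l, r` two `ℂ[∂]`-module homomorphisms `A → Cend(M)`
(encoded by the bilinear, conformally sesquilinear actions
`la a v = l(a)_λ v` and `ra v a = r(a)_{-∂-λ} v = v_λ a`).  Then `(M, l, r)`
is a conformal module over `A` if and only if `A ⊕ M` is a left-symmetric
conformal algebra for `(a+u)_λ(b+v) = a_λ b + l(a)_λ v + r(b)_{-∂-λ} u`. -/
theorem module_iff_semidirect {A M : Type*} [AddCommGroup A] [Module ℂ A]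
    [AddCommGroup M] [Module ℂ M]
    (D : Module.End ℂ A) (Dm : Module.End ℂ M) (mul : A → A → ℕ →₀ A)
    (la : A → M → ℕ →₀ M) (ra : M → A → ℕ →₀ M)
    (hA : IsLSC D mul) (hbl : Bilin la) (hbr : Bilin ra)
    (hl1 : ∀ (l : ℂ) (a : A) (v : M), ev l (la (D a) v) = (-l) • ev l (la a v))
    (hl2 : ∀ (l : ℂ) (a : A) (v : M),
      ev l (la a (Dm v)) = Dm (ev l (la a v)) + l • ev l (la a v))
    (hr1 : ∀ (l : ℂ) (v : M) (a : A), ev l (ra (Dm v) a) = (-l) • ev l (ra v a))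
    (hr2 : ∀ (l : ℂ) (v : M) (a : A),
      ev l (ra v (D a)) = Dm (ev l (ra v a)) + l • ev l (ra v a)) :
    IsLSCMod D Dm mul la ra ↔
      IsLSC (LinearMap.prodMap D Dm)
        (fun x y => pairF (mul x.1 y.1) (la x.1 y.2 + ra x.2 y.1)) := by
  have mz1 : ∀ b : A, mul 0 b = 0 := bilin_zero_left hA.bilin
  have mz2 : ∀ a : A, mul a 0 = 0 := bilin_zero_right hA.bilin
  have lz1 : ∀ v : M, la 0 v = 0 := bilin_zero_left hbl
  have lz2 : ∀ a : A, la a 0 = 0 := bilin_zero_right hbl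
  have rz1 : ∀ b : A, ra 0 b = 0 := bilin_zero_left hbr
  have rz2 : ∀ v : M, ra v 0 = 0 := bilin_zero_right hbr
  constructor
  · intro h
    constructor
    · refine ⟨?_, ?_, ?_, ?_⟩
      · intro x x' y
        simp only [Prod.fst_add, Prod.snd_add, hA.bilin.1, hbl.1, hbr.1, ← pairF_add']
        congr 1
        abel
      · intro r x y
        simp only [Prod.smul_fst, Prod.smul_snd, hA.bilin.2.1, hbl.2.1, hbr.2.1,
          ← smul_add, pairF_smul']
      · intro x y y'
        simp only [Prod.fst_add, Prod.snd_add, hA.bilin.2.2.1, hbl.2.2.1, hbr.2.2.1,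
          ← pairF_add']
        congr 1
        abel
      · intro r x y
        simp only [Prod.smul_fst, Prod.smul_snd, hA.bilin.2.2.2, hbl.2.2.2, hbr.2.2.2,
          ← smul_add, pairF_smul']
    · intro l x y
      apply Prod.ext <;>
        simp [ev_pairF', ev_add', hl1, hr1, hA.sesq1, smul_add] <;> abel
    · intro l x y
      apply Prod.ext <;>
        simp [ev_pairF', ev_add', hl2, hr2, hA.sesq2, smul_add, map_add] <;> abel
    · intro l m x y z
      obtain ⟨a, u⟩ := x; obtain ⟨b, v⟩ := y; obtain ⟨c, w⟩ := z
      apply Prod.ext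
      · simp only [ev_pairF', Prod.fst_sub, Prod.snd_sub]
        exact hA.lsym l m a b c
      · simp only [ev_pairF', Prod.fst_sub, Prod.snd_sub, hbl.2.2.1, hbr.1, ev_add']
        have e1 := h.lcomp l m a b w
        have e2 := h.rcomp l m a v c
        have e3 := h.rcomp m l b u c
        rw [add_comm m l] at e3
        have total := congrArg₂ (HAdd.hAdd) (congrArg₂ (HAdd.hAdd) e1 e2) e3.symm
        abel_nf at total ⊢
        rw [total]
  · intro h
    refine ⟨hbl, hbr, hl1, hl2, hr1, hr2, ?_, ?_⟩
    · intro l m a b w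
      have key := h.lsym l m (a, 0) (b, 0) (0, w)
      simp only [ev_pairF', mz1, mz2, lz1, lz2, rz1, rz2, ev_zero', add_zero, zero_add,
        Prod.mk_sub_mk, Prod.mk.injEq] at key
      exact key.2
    · intro l m a v c
      have key := h.lsym l m (a, 0) (0, v) (c, 0)
      simp only [ev_pairF', mz1, mz2, lz1, lz2, rz1, rz2, ev_zero', add_zero, zero_add,
        Prod.mk_sub_mk, Prod.mk.injEq] at key
      exact key.2

end LSCpaper
end

section
/- Let $A$ be a left-symmetric conformal algebra and let $\theta_t, \theta'_t$ be two equivalent formal 1-parameter deformations of $A$. Then $\theta'_1 - \theta_1 = \delta\phi_1$ for the linear term $\phi_1$ of the equivalence; in particular $\theta_1$ and $\theta'_1$ lie in the same cohomology class in $H^2(A,A)$. -/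
namespace LSCpaper

variable {A : Type*} [AddCommGroup A] [Module ℂ A]

/-- `θ` (with `θ 0` the original product) is a formal `1`-parameter
deformation of the left-symmetric conformal algebra `(A, D, θ 0)`:
each `θ i` is a `2`-cochain and the left-symmetric identity holds in each
degree of `t`. -/
structure IsFormalDef (D : Module.End ℂ A) (θ : ℕ → A → A → ℕ →₀ A) : Prop where
  base : IsLSC D (θ 0)
  bilin : ∀ i, Bilin (θ i)
  sesq1 : ∀ i (l : ℂ) (a b : A), ev l (θ i (D a) b) = (-l) • ev l (θ i a b)
  sesq2 : ∀ i (l : ℂ) (a b : A),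
    ev l (θ i a (D b)) = D (ev l (θ i a b)) + l • ev l (θ i a b)
  deform : ∀ (n : ℕ) (l m : ℂ) (a b c : A),
    (∑ i ∈ Finset.range (n + 1),
        (ev (l + m) (θ i (ev l (θ (n - i) a b)) c)
          - ev l (θ i a (ev m (θ (n - i) b c))))) =
      (∑ i ∈ Finset.range (n + 1),
        (ev (l + m) (θ i (ev m (θ (n - i) b a)) c)
          - ev m (θ i b (ev l (θ (n - i) a c)))))

end LSCpaper

namespace LSCpaper

/-- Let `θ_t` and `θ'_t` be two equivalent formal
`1`-parameter deformations of a left-symmetric conformal algebra `A`, via a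
formal isomorphism `φ_t = Σ φᵢ tⁱ` with `φ₀ = id`.  Then
`θ'₁ - θ₁ = δ φ₁`, so `θ₁` and `θ'₁` lie in the same cohomology class in
`H²(A, A)`. -/
theorem equivalent_deformations_cohomologous {A : Type*} [AddCommGroup A] [Module ℂ A]
    (D : Module.End ℂ A) (θ θ' : ℕ → A → A → ℕ →₀ A)
    (hθ : IsFormalDef D θ) (hθ' : IsFormalDef D θ')
    (hsame : θ' 0 = θ 0)
    (φ : ℕ → A →ₗ[ℂ] A)
    (hφD : ∀ i a, φ i (D a) = D (φ i a))
    (hφ0 : φ 0 = LinearMap.id)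
    (hequiv : ∀ (n : ℕ) (l : ℂ) (a b : A),
      (∑ i ∈ Finset.range (n + 1), φ i (ev l (θ' (n - i) a b))) =
        ∑ i ∈ Finset.range (n + 1), ∑ j ∈ Finset.range (n + 1 - i),
          ev l (θ i (φ j a) (φ (n - i - j) b))) :
    ∀ (l : ℂ) (a b : A),
      ev l (θ' 1 a b) - ev l (θ 1 a b) =
        ev l (θ 0 (φ 1 a) b) + ev l (θ 0 a (φ 1 b)) - φ 1 (ev l (θ 0 a b)) := by
  intro l a b
  have h := hequiv 1 l a b
  simp [Finset.sum_range_succ, hφ0, hsame] at h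
  linear_combination (norm := abel) h

end LSCpaper
end
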